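/- Let σ > 0, R ≥ 0, C ∈ (0,1), and let g : [0,1] → [0,1] be measurable with ∫₀¹ g(y) dy = C and ∫₀¹ Φ⁻¹(y) g(y) dy = D. Suppose a ∈ [0, 1 − C] satisfies Φ'(Φ⁻¹(a)) − Φ'(Φ⁻¹(a + C)) = D (equivalently ∫ₐ^{a+C} Φ⁻¹(y) dy = D). Then ∫₀¹ g(y) · exp((R/σ)·Φ⁻¹(y) − R²/(2σ²)) dy ≥ ∫ₐ^{a+C} exp((R/σ)·Φ⁻¹(y) − R²/(2σ²)) dy = Φ(Φ⁻¹(a + C) − R/σ) − Φ(Φ⁻¹(a) − R/σ), with equality when g is the indicator function of [a, a + C]. -/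

import Mathlib

open MeasureTheory ProbabilityTheory Real

noncomputable section

/-- The standard normal cumulative distribution function Φ. -/
def Phi (x : ℝ) : ℝ := ((gaussianReal 0 1) (Set.Iic x)).toReal

/-- The inverse Φ⁻¹ of the standard normal CDF (meaningful on (0,1)). -/
def PhiInv : ℝ → ℝ := Function.invFun Phi

/-- The standard normal probability density function Φ'. -/
def stdPdf (x : ℝ) : ℝ := Real.exp (-x ^ 2 / 2) / Real.sqrt (2 * Real.pi)

/-- `Φ(Φ⁻¹(y) - c)` with the conventions `Φ⁻¹(0) = -∞`, `Φ⁻¹(1) = +∞`,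
`Φ(-∞ - c) = 0`, `Φ(+∞ - c) = 1`. -/
def PhiShift (c y : ℝ) : ℝ := if y ≤ 0 then 0 else if 1 ≤ y then 1 else Phi (PhiInv y - c)

/-- `Φ'(Φ⁻¹(y))` with the conventions `Φ⁻¹(0) = -∞`, `Φ⁻¹(1) = +∞`, `Φ'(±∞) = 0`. -/
def pdfAtQuantile (y : ℝ) : ℝ := if y ≤ 0 then 0 else if 1 ≤ y then 0 else stdPdf (PhiInv y)

/-- The isotropic Gaussian measure `N(0, σ²I_d)` on `ℝ^d`. -/
def gaussPi (σ : ℝ) (d : ℕ) : Measure (EuclideanSpace ℝ (Fin d)) :=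
  Measure.map (MeasurableEquiv.toLp 2 (Fin d → ℝ))
    (Measure.pi fun _ : Fin d => gaussianReal 0 (Real.toNNReal (σ ^ 2)))

/-- The Gaussian-smoothed function `p_a(x) = E_{ε ~ N(0,σ²I_d)}[f(x+ε)]`. -/
def smoothed (σ : ℝ) (d : ℕ) (f : EuclideanSpace ℝ (Fin d) → ℝ)
    (x : EuclideanSpace ℝ (Fin d)) : ℝ := ∫ ε, f (x + ε) ∂(gaussPi σ d)

/-- A centered real random variable `Z` is `(a,b)`-subexponential if `E[Z] = 0` and
`E[exp (l Z)] ≤ exp (a² l² / 2)` for all `|l| ≤ 1/b`. -/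
def IsSubexponential {Ω : Type*} [MeasurableSpace Ω] (μ : Measure Ω) (Z : Ω → ℝ)
    (a b : ℝ) : Prop :=
  (∫ ω, Z ω ∂μ) = 0 ∧
    ∀ l : ℝ, |l| ≤ 1 / b → (∫ ω, Real.exp (l * Z ω) ∂μ) ≤ Real.exp (a ^ 2 * l ^ 2 / 2)

open Set Filter Topology

lemma stdPdf_eq : stdPdf = gaussianPDFReal 0 1 := by
  ext x
  simp [stdPdf, gaussianPDFReal, div_eq_inv_mul, mul_comm]

lemma stdPdf_pos (x : ℝ) : 0 < stdPdf x := by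
  rw [stdPdf_eq]; exact gaussianPDFReal_pos 0 1 x one_ne_zero

lemma stdPdf_continuous : Continuous stdPdf := by
  unfold stdPdf
  fun_prop

lemma integrable_stdPdf : Integrable stdPdf := by
  rw [stdPdf_eq]; exact integrable_gaussianPDFReal 0 1

lemma integral_stdPdf : ∫ x, stdPdf x = 1 := by
  rw [stdPdf_eq]; exact integral_gaussianPDFReal_eq_one 0 one_ne_zero

lemma Phi_eq (x : ℝ) : Phi x = ∫ t in Iic x, stdPdf t := by
  rw [Phi, gaussianReal_apply_eq_integral 0 one_ne_zero, ENNReal.toReal_ofReal, stdPdf_eq]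
  rw [← stdPdf_eq]
  exact setIntegral_nonneg measurableSet_Iic fun t _ => (stdPdf_pos t).le

lemma Phi_sub (x y : ℝ) : Phi y - Phi x = ∫ t in x..y, stdPdf t := by
  rw [Phi_eq, Phi_eq, intervalIntegral.integral_Iic_sub_Iic integrable_stdPdf.integrableOn
    integrable_stdPdf.integrableOn]

lemma Phi_hasDerivAt (x : ℝ) : HasDerivAt Phi (stdPdf x) x := by
  have h : ∀ y, Phi y = Phi 0 + ∫ t in (0:ℝ)..y, stdPdf t := by
    intro y; rw [← Phi_sub]; ring
  have : HasDerivAt (fun y => Phi 0 + ∫ t in (0:ℝ)..y, stdPdf t) (stdPdf x) x := by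
    refine HasDerivAt.const_add _ ?_
    exact intervalIntegral.integral_hasDerivAt_right
      (integrable_stdPdf.intervalIntegrable)
      (stdPdf_continuous.aestronglyMeasurable.stronglyMeasurableAtFilter)
      stdPdf_continuous.continuousAt
  exact this.congr_of_eventuallyEq (Filter.Eventually.of_forall h)

lemma Phi_continuous : Continuous Phi :=
  continuous_iff_continuousAt.2 fun x => (Phi_hasDerivAt x).continuousAt

lemma Phi_strictMono : StrictMono Phi := by
  apply strictMono_of_deriv_pos
  intro x; rw [(Phi_hasDerivAt x).deriv]; exact stdPdf_pos x

lemma Phi_injective : Function.Injective Phi := Phi_strictMono.injective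

lemma Phi_tendsto_atTop : Tendsto Phi atTop (𝓝 1) := by
  have h : ∀ x, Phi x = ∫ t, (Iic x).indicator stdPdf t := by
    intro x; rw [Phi_eq, integral_indicator measurableSet_Iic]
  rw [show (1:ℝ) = ∫ t, stdPdf t from integral_stdPdf.symm]
  simp only [funext h]
  refine tendsto_integral_filter_of_dominated_convergence stdPdf ?_ ?_ integrable_stdPdf ?_
  · exact Eventually.of_forall fun x =>
      (integrable_stdPdf.indicator measurableSet_Iic).aestronglyMeasurable
  · exact Eventually.of_forall fun x => Eventually.of_forall fun t => by
      by_cases hmem : t ∈ Iic x <;>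
        simp [indicator, hmem, Real.norm_of_nonneg (stdPdf_pos t).le, (stdPdf_pos t).le]
  · refine Eventually.of_forall fun t => ?_
    refine Tendsto.congr' ?_ tendsto_const_nhds
    filter_upwards [eventually_ge_atTop t] with x hx
    simp [indicator_of_mem (mem_Iic.2 hx)]

lemma Phi_tendsto_atBot : Tendsto Phi atBot (𝓝 0) := by
  have h : ∀ x, Phi x = ∫ t, (Iic x).indicator stdPdf t := by
    intro x; rw [Phi_eq, integral_indicator measurableSet_Iic]
  rw [show (0:ℝ) = ∫ (t:ℝ), (0:ℝ) from by simp]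
  simp only [funext h]
  refine tendsto_integral_filter_of_dominated_convergence stdPdf ?_ ?_ integrable_stdPdf ?_
  · exact Eventually.of_forall fun x =>
      (integrable_stdPdf.indicator measurableSet_Iic).aestronglyMeasurable
  · exact Eventually.of_forall fun x => Eventually.of_forall fun t => by
      by_cases hmem : t ∈ Iic x <;>
        simp [indicator, hmem, Real.norm_of_nonneg (stdPdf_pos t).le, (stdPdf_pos t).le]
  · refine Eventually.of_forall fun t => ?_
    refine Tendsto.congr' ?_ tendsto_const_nhds
    filter_upwards [eventually_lt_atBot t] with x hx
    simp [indicator_of_notMem (fun h => absurd (mem_Iic.1 h) (not_le.2 hx))]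

lemma Phi_mem_Ioo (x : ℝ) : Phi x ∈ Ioo (0:ℝ) 1 := by
  constructor
  · have h1 : Phi (x-1) < Phi x := Phi_strictMono (by linarith)
    have h0 : 0 ≤ Phi (x-1) := by
      rw [Phi_eq]; exact setIntegral_nonneg measurableSet_Iic fun t _ => (stdPdf_pos t).le
    linarith
  · have h1 : Phi x < Phi (x+1) := Phi_strictMono (by linarith)
    have h2 : Phi (x+1) ≤ 1 := by
      have := Phi_tendsto_atTop
      have hmono : ∀ z ≥ x+1, Phi (x+1) ≤ Phi z := fun z hz => Phi_strictMono.monotone hz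
      by_contra hc
      push_neg at hc
      have := this.eventually (eventually_lt_nhds hc)
      obtain ⟨z, hz1, hz2⟩ := (this.and (eventually_ge_atTop (x+1))).exists
      exact absurd (hmono z hz2) (not_le.2 hz1)
    linarith

lemma Phi_surj {y : ℝ} (hy : y ∈ Ioo (0:ℝ) 1) : ∃ x, Phi x = y := by
  obtain ⟨x₀, hx₀⟩ := (Phi_tendsto_atBot.eventually (eventually_lt_nhds hy.1)).exists
  obtain ⟨x₁, hx₁⟩ := (Phi_tendsto_atTop.eventually (eventually_gt_nhds hy.2)).exists
  have hle : x₀ ≤ x₁ := by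
    by_contra h; push_neg at h
    exact absurd (Phi_strictMono h) (by linarith)
  obtain ⟨x, _, hx⟩ := intermediate_value_Icc hle Phi_continuous.continuousOn
    ⟨hx₀.le, hx₁.le⟩
  exact ⟨x, hx⟩

lemma PhiInv_Phi (x : ℝ) : PhiInv (Phi x) = x := Function.leftInverse_invFun Phi_injective x

lemma Phi_PhiInv {y : ℝ} (hy : y ∈ Ioo (0:ℝ) 1) : Phi (PhiInv y) = y :=
  Function.invFun_eq (Phi_surj hy)

lemma PhiInv_lt_iff {y : ℝ} (hy : y ∈ Ioo (0:ℝ) 1) (x : ℝ) : PhiInv y < x ↔ y < Phi x := by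
  rw [← Phi_PhiInv hy, Phi_strictMono.lt_iff_lt, Phi_PhiInv hy]

lemma PhiInv_strictMonoOn : StrictMonoOn PhiInv (Ioo (0:ℝ) 1) := by
  intro y₁ h₁ y₂ h₂ h
  have := Phi_PhiInv h₁; have := Phi_PhiInv h₂
  by_contra hc; push_neg at hc
  have := Phi_strictMono.monotone hc
  rw [Phi_PhiInv h₁, Phi_PhiInv h₂] at this
  linarith

lemma stdPdf_shift (t x : ℝ) : stdPdf x * Real.exp (t*x - t^2/2) = stdPdf (x - t) := by
  unfold stdPdf
  rw [div_mul_eq_mul_div, ← Real.exp_add]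
  ring_nf

lemma integral_stdPdf_shift_Iic (t b : ℝ) : ∫ x in Iic b, stdPdf (x - t) = Phi (b - t) := by
  rw [← integral_indicator measurableSet_Iic]
  have h : ∀ x, (Iic b).indicator (fun x => stdPdf (x - t)) x
      = (Iic (b - t)).indicator stdPdf (x - t) := by
    intro x
    by_cases hx : x ≤ b
    · rw [indicator_of_mem (mem_Iic.2 hx), indicator_of_mem (mem_Iic.2 (by linarith))]
    · rw [indicator_of_notMem (fun h => hx (mem_Iic.1 h)),
        indicator_of_notMem (fun h => hx (by have := mem_Iic.1 h; linarith))]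
  simp_rw [h]
  rw [integral_sub_right_eq_self ((Iic (b-t)).indicator stdPdf) t,
    integral_indicator measurableSet_Iic, ← Phi_eq]

lemma integral_stdPdf_shift_all (t : ℝ) : ∫ x, stdPdf (x - t) = 1 := by
  rw [integral_sub_right_eq_self stdPdf t, integral_stdPdf]

lemma integrable_stdPdf_shift (t : ℝ) : Integrable (fun x => stdPdf (x - t)) :=
  integrable_stdPdf.comp_sub_right t

lemma cov (S : Set ℝ) (hS : MeasurableSet S) (G : ℝ → ℝ) :
    ∫ y in Phi '' S, G y = ∫ x in S, stdPdf x * G (Phi x) := by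
  have := integral_image_eq_integral_abs_deriv_smul hS
    (fun x _ => (Phi_hasDerivAt x).hasDerivWithinAt) (Phi_injective.injOn) G
  simpa [abs_of_pos (stdPdf_pos _), smul_eq_mul] using this

lemma covInt (S : Set ℝ) (hS : MeasurableSet S) (G : ℝ → ℝ) :
    IntegrableOn G (Phi '' S) ↔ IntegrableOn (fun x => stdPdf x * G (Phi x)) S := by
  have := integrableOn_image_iff_integrableOn_abs_deriv_smul hS
    (fun x _ => (Phi_hasDerivAt x).hasDerivWithinAt) (Phi_injective.injOn) G
  simpa [abs_of_pos (stdPdf_pos _), smul_eq_mul] using this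

lemma Phi_image_Ioo (x₁ x₂ : ℝ) : Phi '' Ioo x₁ x₂ = Ioo (Phi x₁) (Phi x₂) := by
  ext y
  constructor
  · rintro ⟨x, hx, rfl⟩
    exact ⟨Phi_strictMono hx.1, Phi_strictMono hx.2⟩
  · rintro ⟨h1, h2⟩
    have hy : y ∈ Ioo (0:ℝ) 1 := ⟨(Phi_mem_Ioo x₁).1.trans h1, h2.trans (Phi_mem_Ioo x₂).2⟩
    obtain ⟨x, rfl⟩ := Phi_surj hy
    exact ⟨x, ⟨Phi_strictMono.lt_iff_lt.1 h1, Phi_strictMono.lt_iff_lt.1 h2⟩, rfl⟩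

lemma Phi_image_Iio (x₂ : ℝ) : Phi '' Iio x₂ = Ioo 0 (Phi x₂) := by
  ext y
  constructor
  · rintro ⟨x, hx, rfl⟩
    exact ⟨(Phi_mem_Ioo x).1, Phi_strictMono hx⟩
  · rintro ⟨h1, h2⟩
    have hy : y ∈ Ioo (0:ℝ) 1 := ⟨h1, h2.trans (Phi_mem_Ioo x₂).2⟩
    obtain ⟨x, rfl⟩ := Phi_surj hy
    exact ⟨x, Phi_strictMono.lt_iff_lt.1 h2, rfl⟩

lemma Phi_image_Ioi (x₁ : ℝ) : Phi '' Ioi x₁ = Ioo (Phi x₁) 1 := by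
  ext y
  constructor
  · rintro ⟨x, hx, rfl⟩
    exact ⟨Phi_strictMono hx, (Phi_mem_Ioo x).2⟩
  · rintro ⟨h1, h2⟩
    have hy : y ∈ Ioo (0:ℝ) 1 := ⟨(Phi_mem_Ioo x₁).1.trans h1, h2⟩
    obtain ⟨x, rfl⟩ := Phi_surj hy
    exact ⟨x, Phi_strictMono.lt_iff_lt.1 h1, rfl⟩

lemma Phi_image_univ : Phi '' univ = Ioo 0 1 := by
  ext y
  constructor
  · rintro ⟨x, _, rfl⟩; exact Phi_mem_Ioo x
  · intro hy; obtain ⟨x, rfl⟩ := Phi_surj hy; exact ⟨x, mem_univ x, rfl⟩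

-- tail limits of stdPdf
lemma stdPdf_tendsto_atTop : Tendsto stdPdf atTop (𝓝 0) := by
  have h1 : Tendsto (fun x : ℝ => -x^2/2) atTop atBot := by
    apply Tendsto.atBot_div_const (by norm_num)
    apply tendsto_neg_atBot_iff.2
    exact tendsto_pow_atTop (by norm_num)
  have h2 := (Real.tendsto_exp_atBot.comp h1).div_const (Real.sqrt (2*Real.pi))
  rw [zero_div] at h2
  exact h2

lemma stdPdf_tendsto_atBot : Tendsto stdPdf atBot (𝓝 0) := by
  have h1 : Tendsto (fun x : ℝ => -x^2/2) atBot atBot := by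
    apply Tendsto.atBot_div_const (by norm_num)
    apply tendsto_neg_atBot_iff.2
    have hneg : Tendsto (fun x : ℝ => -x) atBot atTop := tendsto_neg_atBot_atTop
    have := (tendsto_pow_atTop (n := 2) (by norm_num)).comp hneg
    exact this.congr (fun x => by simp [Function.comp])
  have h2 := (Real.tendsto_exp_atBot.comp h1).div_const (Real.sqrt (2*Real.pi))
  rw [zero_div] at h2
  exact h2

lemma hasDerivAt_neg_stdPdf (x : ℝ) : HasDerivAt (fun x => -stdPdf x) (x * stdPdf x) x := by
  unfold stdPdf
  have h1 : HasDerivAt (fun y : ℝ => -y^2/2) (-x) x := by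
    have := ((hasDerivAt_pow 2 x).neg).div_const 2
    refine this.congr_deriv ?_
    push_cast
    ring_nf
  have h2 := (h1.exp.div_const (Real.sqrt (2*Real.pi))).neg
  refine h2.congr_deriv ?_
  ring

lemma integrable_x_stdPdf : Integrable (fun x => x * stdPdf x) := by
  have h := integrable_rpow_mul_exp_neg_mul_sq (b := 1/2) (by norm_num) (s := 1) (by norm_num)
  have h2 := h.mul_const ((Real.sqrt (2*Real.pi))⁻¹)
  apply h2.congr (Eventually.of_forall fun x => ?_)
  simp only [Real.rpow_one]
  unfold stdPdf
  rw [div_eq_mul_inv]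
  ring_nf

lemma PhiShift_zero (t : ℝ) : PhiShift t 0 = 0 := by simp [PhiShift]
lemma PhiShift_one (t : ℝ) : PhiShift t 1 = 1 := by simp [PhiShift]
lemma PhiShift_mid (t : ℝ) {y : ℝ} (hy : y ∈ Ioo (0:ℝ) 1) :
    PhiShift t y = Phi (PhiInv y - t) := by
  rw [PhiShift, if_neg (by linarith [hy.1]), if_neg (by linarith [hy.2])]
lemma pdfAtQuantile_zero : pdfAtQuantile 0 = 0 := by simp [pdfAtQuantile]
lemma pdfAtQuantile_one : pdfAtQuantile 1 = 0 := by simp [pdfAtQuantile]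
lemma pdfAtQuantile_mid {y : ℝ} (hy : y ∈ Ioo (0:ℝ) 1) :
    pdfAtQuantile y = stdPdf (PhiInv y) := by
  rw [pdfAtQuantile, if_neg (by linarith [hy.1]), if_neg (by linarith [hy.2])]

lemma integral_w (t u v : ℝ) (h0 : 0 ≤ u) (huv : u < v) (h1 : v ≤ 1) :
    IntegrableOn (fun y => Real.exp (t * PhiInv y - t^2/2)) (Ioo u v) ∧
    ∫ y in Ioo u v, Real.exp (t * PhiInv y - t^2/2) = PhiShift t v - PhiShift t u := by
  set G := fun y => Real.exp (t * PhiInv y - t^2/2) with hGdef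
  have hG : (fun x => stdPdf x * G (Phi x)) = fun x => stdPdf (x - t) := by
    funext x
    rw [hGdef]
    simp only [PhiInv_Phi]
    exact stdPdf_shift t x
  rcases eq_or_lt_of_le h0 with hu0 | hu0 <;> rcases eq_or_lt_of_le h1 with hv1 | hv1
  · -- u = 0, v = 1
    subst hv1; rw [← hu0, ← Phi_image_univ]
    constructor
    · rw [covInt _ MeasurableSet.univ, hG]
      exact (integrable_stdPdf_shift t).integrableOn
    · rw [cov _ MeasurableSet.univ, hG, setIntegral_univ, integral_stdPdf_shift_all,
        PhiShift_one, PhiShift_zero]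
      norm_num
  · -- u = 0, v < 1
    have hv : v ∈ Ioo (0:ℝ) 1 := ⟨by linarith, hv1⟩
    have himg : Phi '' Iio (PhiInv v) = Ioo u v := by
      rw [Phi_image_Iio, Phi_PhiInv hv, ← hu0]
    rw [← himg]
    constructor
    · rw [covInt _ measurableSet_Iio, hG]
      exact (integrable_stdPdf_shift t).integrableOn
    · rw [cov _ measurableSet_Iio, hG, ← integral_Iic_eq_integral_Iio,
        integral_stdPdf_shift_Iic, PhiShift_mid t hv, ← hu0, PhiShift_zero]
      ring
  · -- u > 0, v = 1
    subst hv1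
    have hu : u ∈ Ioo (0:ℝ) 1 := ⟨hu0, huv⟩
    have himg : Phi '' Ioi (PhiInv u) = Ioo u 1 := by
      rw [Phi_image_Ioi, Phi_PhiInv hu]
    rw [← himg]
    constructor
    · rw [covInt _ measurableSet_Ioi, hG]
      exact (integrable_stdPdf_shift t).integrableOn
    · rw [cov _ measurableSet_Ioi, hG]
      have hsplit := integral_add_compl (measurableSet_Iic (a := PhiInv u)) (integrable_stdPdf_shift t)
      rw [compl_Iic] at hsplit
      rw [PhiShift_one, PhiShift_mid t hu]
      have := integral_stdPdf_shift_Iic t (PhiInv u)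
      have h2 := integral_stdPdf_shift_all t
      linarith [hsplit]
  · -- u > 0, v < 1
    have hu : u ∈ Ioo (0:ℝ) 1 := ⟨hu0, by linarith⟩
    have hv : v ∈ Ioo (0:ℝ) 1 := ⟨by linarith, hv1⟩
    have hx12 : PhiInv u < PhiInv v := PhiInv_strictMonoOn hu hv huv
    have himg : Phi '' Ioo (PhiInv u) (PhiInv v) = Ioo u v := by
      rw [Phi_image_Ioo, Phi_PhiInv hu, Phi_PhiInv hv]
    rw [← himg]
    constructor
    · rw [covInt _ measurableSet_Ioo, hG]
      exact (integrable_stdPdf_shift t).integrableOn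
    · rw [cov _ measurableSet_Ioo, hG, ← integral_Ioc_eq_integral_Ioo,
        ← intervalIntegral.integral_of_le hx12.le,
        intervalIntegral.integral_comp_sub_right _ t, ← Phi_sub,
        PhiShift_mid t hu, PhiShift_mid t hv]

lemma integral_phiInv (u v : ℝ) (h0 : 0 ≤ u) (huv : u < v) (h1 : v ≤ 1) :
    IntegrableOn PhiInv (Ioo u v) ∧
    ∫ y in Ioo u v, PhiInv y = pdfAtQuantile u - pdfAtQuantile v := by
  have hG : (fun x => stdPdf x * PhiInv (Phi x)) = fun x => x * stdPdf x := by
    funext x; rw [PhiInv_Phi]; ring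
  have hbot : Tendsto (fun x => -stdPdf x) atBot (𝓝 0) := by
    simpa using stdPdf_tendsto_atBot.neg
  have htop : Tendsto (fun x => -stdPdf x) atTop (𝓝 0) := by
    simpa using stdPdf_tendsto_atTop.neg
  rcases eq_or_lt_of_le h0 with hu0 | hu0 <;> rcases eq_or_lt_of_le h1 with hv1 | hv1
  · subst hv1; rw [← hu0, ← Phi_image_univ]
    constructor
    · rw [covInt _ MeasurableSet.univ, hG]
      exact integrable_x_stdPdf.integrableOn
    · rw [cov _ MeasurableSet.univ, hG, setIntegral_univ,
        integral_of_hasDerivAt_of_tendsto hasDerivAt_neg_stdPdf integrable_x_stdPdf hbot htop,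
        pdfAtQuantile_one, pdfAtQuantile_zero]
  · have hv : v ∈ Ioo (0:ℝ) 1 := ⟨by linarith, hv1⟩
    have himg : Phi '' Iio (PhiInv v) = Ioo u v := by
      rw [Phi_image_Iio, Phi_PhiInv hv, ← hu0]
    rw [← himg]
    constructor
    · rw [covInt _ measurableSet_Iio, hG]
      exact integrable_x_stdPdf.integrableOn
    · rw [cov _ measurableSet_Iio, hG, ← integral_Iic_eq_integral_Iio,
        integral_Iic_of_hasDerivAt_of_tendsto
          (hasDerivAt_neg_stdPdf _).continuousAt.continuousWithinAt
          (fun x _ => hasDerivAt_neg_stdPdf x) integrable_x_stdPdf.integrableOn hbot,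
        pdfAtQuantile_mid hv, ← hu0, pdfAtQuantile_zero]
      ring
  · subst hv1
    have hu : u ∈ Ioo (0:ℝ) 1 := ⟨hu0, huv⟩
    have himg : Phi '' Ioi (PhiInv u) = Ioo u 1 := by
      rw [Phi_image_Ioi, Phi_PhiInv hu]
    rw [← himg]
    constructor
    · rw [covInt _ measurableSet_Ioi, hG]
      exact integrable_x_stdPdf.integrableOn
    · rw [cov _ measurableSet_Ioi, hG,
        integral_Ioi_of_hasDerivAt_of_tendsto
          (hasDerivAt_neg_stdPdf _).continuousAt.continuousWithinAt
          (fun x _ => hasDerivAt_neg_stdPdf x) integrable_x_stdPdf.integrableOn htop,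
        pdfAtQuantile_mid hu, pdfAtQuantile_one]
      ring
  · have hu : u ∈ Ioo (0:ℝ) 1 := ⟨hu0, by linarith⟩
    have hv : v ∈ Ioo (0:ℝ) 1 := ⟨by linarith, hv1⟩
    have hx12 : PhiInv u < PhiInv v := PhiInv_strictMonoOn hu hv huv
    have himg : Phi '' Ioo (PhiInv u) (PhiInv v) = Ioo u v := by
      rw [Phi_image_Ioo, Phi_PhiInv hu, Phi_PhiInv hv]
    rw [← himg]
    constructor
    · rw [covInt _ measurableSet_Ioo, hG]
      exact integrable_x_stdPdf.integrableOn
    · rw [cov _ measurableSet_Ioo, hG, ← integral_Ioc_eq_integral_Ioo,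
        ← intervalIntegral.integral_of_le hx12.le,
        intervalIntegral.integral_eq_sub_of_hasDerivAt
          (fun x _ => hasDerivAt_neg_stdPdf x)
          ((continuous_id.mul stdPdf_continuous).intervalIntegrable _ _),
        pdfAtQuantile_mid hu, pdfAtQuantile_mid hv]
      ring

-- convexity of x ↦ exp (t*x - t^2/2)
lemma convexOn_expAffine (t : ℝ) : ConvexOn ℝ univ (fun x => Real.exp (t*x - t^2/2)) := by
  refine ⟨convex_univ, fun x _ y _ a b ha hb hab => ?_⟩
  have h := convexOn_exp.2 (mem_univ (t*x - t^2/2)) (mem_univ (t*y - t^2/2)) ha hb hab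
  calc Real.exp (t * (a • x + b • y) - t^2/2)
      = Real.exp (a • (t*x - t^2/2) + b • (t*y - t^2/2)) := by
        congr 1
        simp only [smul_eq_mul]
        nlinarith [hab]
    _ ≤ a • Real.exp (t*x - t^2/2) + b • Real.exp (t*y - t^2/2) := h

/-- Secant line bounds for a convex function. -/
lemma secant_bounds {f : ℝ → ℝ} (hf : ConvexOn ℝ univ f) {x₁ x₂ : ℝ} (h12 : x₁ < x₂) :
    (∀ x, x₁ ≤ x → x ≤ x₂ →
      f x ≤ f x₁ + (f x₂ - f x₁)/(x₂ - x₁) * (x - x₁)) ∧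
    (∀ x, x ≤ x₁ ∨ x₂ ≤ x →
      f x₁ + (f x₂ - f x₁)/(x₂ - x₁) * (x - x₁) ≤ f x) := by
  have hd : (0:ℝ) < x₂ - x₁ := by linarith
  set β := (f x₂ - f x₁)/(x₂ - x₁) with hβdef
  have hβ : β * (x₂ - x₁) = f x₂ - f x₁ := div_mul_cancel₀ _ hd.ne'
  constructor
  · intro x hx1 hx2
    rcases eq_or_lt_of_le hx1 with rfl | hx1
    · simp
    rcases eq_or_lt_of_le hx2 with rfl | hx2
    · nlinarith
    have h := hf.slope_mono_adjacent (mem_univ x₁) (mem_univ x₂) hx1 hx2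
    rw [div_le_div_iff₀ (by linarith) (by linarith)] at h
    nlinarith
  · intro x hx
    rcases hx with hx | hx
    · rcases eq_or_lt_of_le hx with rfl | hx
      · simp
      have h := hf.slope_mono_adjacent (mem_univ x) (mem_univ x₂) hx (by linarith)
      rw [div_le_div_iff₀ (by linarith) (by linarith)] at h
      nlinarith
    · rcases eq_or_lt_of_le hx with rfl | hx
      · nlinarith
      have h := hf.slope_mono_adjacent (mem_univ x₁) (mem_univ x) h12 hx
      rw [div_le_div_iff₀ (by linarith) (by linarith)] at h
      nlinarith

set_option maxHeartbeats 1000000 in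
/-- two-constraint minimization: for measurable `g : [0,1] → [0,1]` with
`∫₀¹ g = C` and `∫₀¹ Φ⁻¹(y) g(y) dy = D`, and `a ∈ [0, 1-C]` with
`Φ'(Φ⁻¹(a)) - Φ'(Φ⁻¹(a+C)) = D`, the weighted integral is minimized by the indicator of
`[a, a+C]`:
`∫₀¹ g(y) exp((R/σ)Φ⁻¹(y) - R²/(2σ²)) dy ≥ ∫ₐ^{a+C} exp((R/σ)Φ⁻¹(y) - R²/(2σ²)) dy
= Φ(Φ⁻¹(a+C) - R/σ) - Φ(Φ⁻¹(a) - R/σ)`. -/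
theorem weighted_integral_min_two_constraints (σ R C D a : ℝ) (hσ : 0 < σ) (hR : 0 ≤ R)
    (hC : C ∈ Set.Ioo (0 : ℝ) 1)
    (g : ℝ → ℝ) (hg : Measurable g) (hg01 : ∀ y ∈ Set.Icc (0 : ℝ) 1, g y ∈ Set.Icc (0 : ℝ) 1)
    (hint : (∫ y in (0 : ℝ)..1, g y) = C)
    (hintD : (∫ y in (0 : ℝ)..1, PhiInv y * g y) = D)
    (hamem : a ∈ Set.Icc (0 : ℝ) (1 - C))
    (haD : pdfAtQuantile a - pdfAtQuantile (a + C) = D) :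
    ((∫ y in (0 : ℝ)..1, g y * Real.exp ((R / σ) * PhiInv y - R ^ 2 / (2 * σ ^ 2))) ≥
      ∫ y in a..(a + C), Real.exp ((R / σ) * PhiInv y - R ^ 2 / (2 * σ ^ 2))) ∧
    ((∫ y in a..(a + C), Real.exp ((R / σ) * PhiInv y - R ^ 2 / (2 * σ ^ 2))) =
      PhiShift (R / σ) (a + C) - PhiShift (R / σ) a) ∧
    ((∀ y ∈ Set.Icc (0 : ℝ) 1,
        g y = Set.indicator (Set.Icc a (a + C)) (fun _ => (1 : ℝ)) y) →
      (∫ y in (0 : ℝ)..1, g y * Real.exp ((R / σ) * PhiInv y - R ^ 2 / (2 * σ ^ 2))) =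
        PhiShift (R / σ) (a + C) - PhiShift (R / σ) a) := by
  have hσ0 : σ ≠ 0 := hσ.ne'
  set t := R / σ with htdef
  have ht0 : 0 ≤ t := div_nonneg hR hσ.le
  have hexp2 : R ^ 2 / (2 * σ ^ 2) = t ^ 2 / 2 := by rw [htdef, div_pow, div_div]; ring
  simp only [hexp2]
  set w := fun y => Real.exp (t * PhiInv y - t ^ 2 / 2) with hwdef
  obtain ⟨hC0, hCl1⟩ := hC
  obtain ⟨ha0, haC⟩ := hamem
  have haC1 : a + C ≤ 1 := by linarith
  have haa : a < a + C := by linarith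
  set J := Ioo a (a + C) with hJdef
  have hJm : MeasurableSet J := measurableSet_Ioo
  have hJI : J ⊆ Ioo (0:ℝ) 1 := fun y hy => ⟨lt_of_le_of_lt ha0 hy.1, lt_of_lt_of_le hy.2 haC1⟩
  obtain ⟨hwInt, hwVal⟩ := integral_w t 0 1 le_rfl one_pos le_rfl
  obtain ⟨hwJInt, hwJVal⟩ := integral_w t a (a + C) ha0 haa haC1
  obtain ⟨hpInt, hpVal⟩ := integral_phiInv 0 1 le_rfl one_pos le_rfl
  obtain ⟨hpJInt, hpJVal⟩ := integral_phiInv a (a + C) ha0 haa haC1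
  have hIoc : ∀ f : ℝ → ℝ, (∫ y in (0:ℝ)..1, f y) = ∫ y in Ioo (0:ℝ) 1, f y := fun f => by
    rw [intervalIntegral.integral_of_le zero_le_one, integral_Ioc_eq_integral_Ioo]
  have hIocJ : ∀ f : ℝ → ℝ, (∫ y in a..(a + C), f y) = ∫ y in J, f y := fun f => by
    rw [intervalIntegral.integral_of_le haa.le, integral_Ioc_eq_integral_Ioo]
  -- integrability over Ioo 0 1
  have hmI : volume (Ioo (0:ℝ) 1) ≠ ⊤ := measure_Ioo_lt_top.ne
  have hgb : ∀ᵐ y ∂(volume.restrict (Ioo (0:ℝ) 1)), ‖g y‖ ≤ 1 := by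
    filter_upwards [ae_restrict_mem measurableSet_Ioo] with y hy
    have h := hg01 y ⟨hy.1.le, hy.2.le⟩
    rw [Real.norm_eq_abs, abs_le]
    exact ⟨by linarith [h.1], h.2⟩
  have hgInt : IntegrableOn g (Ioo (0:ℝ) 1) :=
    Measure.integrableOn_of_bounded hmI hg.aestronglyMeasurable hgb
  have hgwInt : IntegrableOn (fun y => g y * w y) (Ioo (0:ℝ) 1) := by
    refine Integrable.mono hwInt
      ((hg.aestronglyMeasurable.restrict).mul hwInt.aestronglyMeasurable) ?_
    filter_upwards [hgb] with y hb
    rw [norm_mul]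
    calc ‖g y‖ * ‖w y‖ ≤ 1 * ‖w y‖ := by
          exact mul_le_mul_of_nonneg_right hb (norm_nonneg _)
      _ = ‖w y‖ := one_mul _
  have hpgInt : IntegrableOn (fun y => PhiInv y * g y) (Ioo (0:ℝ) 1) := by
    refine Integrable.mono hpInt
      (hpInt.aestronglyMeasurable.mul (hg.aestronglyMeasurable.restrict)) ?_
    filter_upwards [hgb] with y hb
    rw [norm_mul]
    calc ‖PhiInv y‖ * ‖g y‖ ≤ ‖PhiInv y‖ * 1 :=
          mul_le_mul_of_nonneg_left hb (norm_nonneg _)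
      _ = ‖PhiInv y‖ := mul_one _
  have hiwInt : IntegrableOn (J.indicator w) (Ioo (0:ℝ) 1) := hwInt.indicator hJm
  have hipInt : IntegrableOn (J.indicator PhiInv) (Ioo (0:ℝ) 1) := hpInt.indicator hJm
  have hi1Int : IntegrableOn (J.indicator (fun _ => (1:ℝ))) (Ioo (0:ℝ) 1) :=
    (integrableOn_const measure_Ioo_lt_top.ne).indicator hJm
  -- values
  have hgC : ∫ y in Ioo (0:ℝ) 1, g y = C := by rw [← hIoc]; exact hint
  have hgD : ∫ y in Ioo (0:ℝ) 1, PhiInv y * g y = D := by rw [← hIoc]; exact hintD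
  have hIJ : Ioo (0:ℝ) 1 ∩ J = J := inter_eq_self_of_subset_right hJI
  have hi1C : ∫ y in Ioo (0:ℝ) 1, J.indicator (fun _ => (1:ℝ)) y = C := by
    rw [setIntegral_indicator hJm, hIJ, setIntegral_const, measureReal_def, Real.volume_Ioo,
      ENNReal.toReal_ofReal (by linarith : (0:ℝ) ≤ a + C - a)]
    simp
  have hipD : ∫ y in Ioo (0:ℝ) 1, J.indicator PhiInv y = D := by
    rw [setIntegral_indicator hJm, hIJ, hpJVal, haD]
  have hiwVal : ∫ y in Ioo (0:ℝ) 1, J.indicator w y = ∫ y in J, w y := by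
    rw [setIntegral_indicator hJm, hIJ]
  refine ⟨?_, ?_, ?_⟩
  · -- main inequality
    rw [ge_iff_le, hIoc (fun y => g y * w y), hIocJ w]
    rcases lt_or_eq_of_le haC1 with hlt | heq
    · -- a + C < 1 : secant argument
      have hvI : a + C ∈ Ioo (0:ℝ) 1 := ⟨by linarith, hlt⟩
      have hobt : ∃ α β : ℝ, (∀ y ∈ J, w y ≤ α + β * PhiInv y) ∧
          (∀ y ∈ Ioo (0:ℝ) 1, y ∉ J → α + β * PhiInv y ≤ w y) := by
        rcases eq_or_lt_of_le ha0 with ha0' | ha0'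
        · -- a = 0
          refine ⟨Real.exp (t * PhiInv (a + C) - t ^ 2 / 2), 0, ?_, ?_⟩
          · intro y hy
            have hyI : y ∈ Ioo (0:ℝ) 1 := hJI hy
            have hle : PhiInv y ≤ PhiInv (a + C) :=
              PhiInv_strictMonoOn.monotoneOn hyI hvI hy.2.le
            simp only [zero_mul, add_zero]
            exact Real.exp_le_exp.2 (by nlinarith [mul_le_mul_of_nonneg_left hle ht0])
          · intro y hyI hyJ
            have hge : a + C ≤ y := by
              by_contra hcon
              push_neg at hcon
              exact hyJ ⟨by rw [← ha0']; exact hyI.1, hcon⟩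
            have hle : PhiInv (a + C) ≤ PhiInv y :=
              PhiInv_strictMonoOn.monotoneOn hvI hyI hge
            simp only [zero_mul, add_zero]
            exact Real.exp_le_exp.2 (by nlinarith [mul_le_mul_of_nonneg_left hle ht0])
        · -- 0 < a
          have huI : a ∈ Ioo (0:ℝ) 1 := ⟨ha0', by linarith⟩
          have h12 : PhiInv a < PhiInv (a + C) := PhiInv_strictMonoOn huI hvI haa
          obtain ⟨hinS, houtS⟩ := secant_bounds (convexOn_expAffine t) h12
          set φ := fun x => Real.exp (t * x - t ^ 2 / 2) with hφdef
          set x₁ := PhiInv a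
          set x₂ := PhiInv (a + C)
          set β := (φ x₂ - φ x₁) / (x₂ - x₁) with hβdef
          refine ⟨φ x₁ - β * x₁, β, ?_, ?_⟩
          · intro y hy
            have hyI : y ∈ Ioo (0:ℝ) 1 := hJI hy
            have h1 : x₁ ≤ PhiInv y := PhiInv_strictMonoOn.monotoneOn huI hyI hy.1.le
            have h2 : PhiInv y ≤ x₂ := PhiInv_strictMonoOn.monotoneOn hyI hvI hy.2.le
            have hs := hinS (PhiInv y) h1 h2
            have heq2 : φ x₁ - β * x₁ + β * PhiInv y = φ x₁ + β * (PhiInv y - x₁) := by ring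
            rw [heq2]
            exact hs
          · intro y hyI hyJ
            have hside : PhiInv y ≤ x₁ ∨ x₂ ≤ PhiInv y := by
              rcases not_and_or.1 (fun h => hyJ (mem_Ioo.2 ⟨h.1, h.2⟩)) with h | h
              · push_neg at h
                exact Or.inl (PhiInv_strictMonoOn.monotoneOn hyI huI h)
              · push_neg at h
                exact Or.inr (PhiInv_strictMonoOn.monotoneOn hvI hyI h)
            have hs := houtS (PhiInv y) hside
            have heq2 : φ x₁ - β * x₁ + β * PhiInv y = φ x₁ + β * (PhiInv y - x₁) := by ring
            rw [heq2]
            exact hs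
      obtain ⟨α, β, hin, hout⟩ := hobt
      set F := fun y => g y * w y - J.indicator w y - α * (g y - J.indicator (fun _ => (1:ℝ)) y)
        - β * (PhiInv y * g y - J.indicator PhiInv y) with hFdef
      have hFnn : ∀ y ∈ Ioo (0:ℝ) 1, 0 ≤ F y := by
        intro y hyI
        have hgy := hg01 y ⟨hyI.1.le, hyI.2.le⟩
        by_cases hyJ : y ∈ J
        · have h1 : w y ≤ α + β * PhiInv y := hin y hyJ
          have hFy : F y = (g y - 1) * (w y - (α + β * PhiInv y)) := by
            simp only [hFdef, indicator_of_mem hyJ]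
            ring
          have hprod := mul_nonneg (sub_nonneg.2 hgy.2) (sub_nonneg.2 h1)
          have hre : (g y - 1) * (w y - (α + β * PhiInv y))
              = (1 - g y) * ((α + β * PhiInv y) - w y) := by ring
          rw [hFy, hre]
          exact hprod
        · have h1 := hout y hyI hyJ
          have hFy : F y = g y * (w y - (α + β * PhiInv y)) := by
            simp only [hFdef, indicator_of_notMem hyJ]
            ring
          rw [hFy]
          exact mul_nonneg hgy.1 (sub_nonneg.2 h1)
      have h0le : 0 ≤ ∫ y in Ioo (0:ℝ) 1, F y := setIntegral_nonneg measurableSet_Ioo hFnn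
      have i2 : IntegrableOn (fun y => α * (g y - J.indicator (fun _ => (1:ℝ)) y))
          (Ioo (0:ℝ) 1) := (hgInt.sub hi1Int).const_mul α
      have i3 : IntegrableOn (fun y => β * (PhiInv y * g y - J.indicator PhiInv y))
          (Ioo (0:ℝ) 1) := (hpgInt.sub hipInt).const_mul β
      have i1 : IntegrableOn (fun y => g y * w y - J.indicator w y) (Ioo (0:ℝ) 1) :=
        hgwInt.sub hiwInt
      have i12 : IntegrableOn (fun y => (g y * w y - J.indicator w y)
          - α * (g y - J.indicator (fun _ => (1:ℝ)) y)) (Ioo (0:ℝ) 1) := i1.sub i2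
      have i4 : IntegrableOn (fun y => g y - J.indicator (fun _ => (1:ℝ)) y) (Ioo (0:ℝ) 1) :=
        hgInt.sub hi1Int
      have i5 : IntegrableOn (fun y => PhiInv y * g y - J.indicator PhiInv y) (Ioo (0:ℝ) 1) :=
        hpgInt.sub hipInt
      have hFval : ∫ y in Ioo (0:ℝ) 1, F y
          = (∫ y in Ioo (0:ℝ) 1, g y * w y) - ∫ y in J, w y := by
        rw [hFdef]
        rw [integral_sub i12 i3,
          integral_sub i1 i2,
          integral_sub hgwInt hiwInt,
          integral_const_mul, integral_const_mul,
          integral_sub hgInt hi1Int, integral_sub hpgInt hipInt,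
          hgC, hi1C, hgD, hipD, hiwVal]
        ring
      have h2 := h0le
      rw [hFval] at h2
      linarith [h2]
    · -- a + C = 1 : equality case
      have ha0' : 0 < a := by linarith
      have huI : a ∈ Ioo (0:ℝ) 1 := ⟨ha0', by linarith⟩
      set x₁ := PhiInv a with hx₁def
      set F := fun y => J.indicator PhiInv y - PhiInv y * g y
        - x₁ * (J.indicator (fun _ => (1:ℝ)) y - g y) with hFdef
      have hFnn : ∀ y ∈ Ioo (0:ℝ) 1, 0 ≤ F y := by
        intro y hyI
        have hgy := hg01 y ⟨hyI.1.le, hyI.2.le⟩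
        by_cases hyJ : y ∈ J
        · have h1 : x₁ ≤ PhiInv y := PhiInv_strictMonoOn.monotoneOn huI hyI hyJ.1.le
          have hFy : F y = (1 - g y) * (PhiInv y - x₁) := by
            simp only [hFdef, indicator_of_mem hyJ]
            ring
          rw [hFy]
          exact mul_nonneg (sub_nonneg.2 hgy.2) (sub_nonneg.2 h1)
        · have hya : y ≤ a := by
            by_contra hcon
            push_neg at hcon
            exact hyJ ⟨hcon, by rw [heq]; exact hyI.2⟩
          have h1 : PhiInv y ≤ x₁ := PhiInv_strictMonoOn.monotoneOn hyI huI hya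
          have hFy : F y = g y * (x₁ - PhiInv y) := by
            simp only [hFdef, indicator_of_notMem hyJ]
            ring
          rw [hFy]
          exact mul_nonneg hgy.1 (sub_nonneg.2 h1)
      have j1 : IntegrableOn (fun y => J.indicator PhiInv y - PhiInv y * g y) (Ioo (0:ℝ) 1) :=
        hipInt.sub hpgInt
      have j2 : IntegrableOn (fun y => x₁ * (J.indicator (fun _ => (1:ℝ)) y - g y))
          (Ioo (0:ℝ) 1) := (hi1Int.sub hgInt).const_mul x₁
      have j3 : IntegrableOn (fun y => J.indicator (fun _ => (1:ℝ)) y - g y) (Ioo (0:ℝ) 1) :=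
        hi1Int.sub hgInt
      have hFInt : IntegrableOn F (Ioo (0:ℝ) 1) := j1.sub j2
      have hFval : ∫ y in Ioo (0:ℝ) 1, F y = 0 := by
        rw [hFdef]
        rw [integral_sub j1 j2,
          integral_sub hipInt hpgInt, integral_const_mul,
          integral_sub hi1Int hgInt, hgC, hi1C, hgD, hipD]
        ring
      have hF0 : F =ᵐ[volume.restrict (Ioo (0:ℝ) 1)] 0 := by
        refine (integral_eq_zero_iff_of_nonneg_ae ?_ hFInt).1 hFval
        filter_upwards [ae_restrict_mem measurableSet_Ioo] with y hy
        exact hFnn y hy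
      have hne : ∀ᵐ y ∂(volume.restrict (Ioo (0:ℝ) 1)), y ≠ a := by
        refine ae_restrict_of_ae ?_
        rw [ae_iff]
        have hset : {y : ℝ | ¬ y ≠ a} = {a} := by ext z; simp
        rw [hset]
        exact measure_singleton a
      have hgw : (fun y => g y * w y)
          =ᵐ[volume.restrict (Ioo (0:ℝ) 1)] (fun y => J.indicator w y) := by
        filter_upwards [hF0, ae_restrict_mem measurableSet_Ioo, hne] with y hFy hyI hya
        have hFy0 : F y = 0 := hFy
        by_cases hyJ : y ∈ J
        · have hx : x₁ < PhiInv y := PhiInv_strictMonoOn huI hyI hyJ.1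
          have hprod : (1 - g y) * (PhiInv y - x₁) = 0 := by
            have hFy' : F y = (1 - g y) * (PhiInv y - x₁) := by
              simp only [hFdef, indicator_of_mem hyJ]
              ring
            rw [← hFy']
            exact hFy0
          have hg1 : g y = 1 := by
            rcases mul_eq_zero.1 hprod with h | h
            · linarith
            · linarith
          rw [indicator_of_mem hyJ, hg1, one_mul]
        · have hya' : y < a := by
            rcases lt_or_eq_of_le (by
              by_contra hcon
              push_neg at hcon
              exact hyJ ⟨hcon, by rw [heq]; exact hyI.2⟩ : y ≤ a) with h | h
            · exact h
            · exact absurd h hya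
          have hx : PhiInv y < x₁ := PhiInv_strictMonoOn hyI huI hya'
          have hprod : g y * (x₁ - PhiInv y) = 0 := by
            have hFy' : F y = g y * (x₁ - PhiInv y) := by
              simp only [hFdef, indicator_of_notMem hyJ]
              ring
            rw [← hFy']
            exact hFy0
          have hg0 : g y = 0 := by
            rcases mul_eq_zero.1 hprod with h | h
            · exact h
            · linarith
          rw [indicator_of_notMem hyJ, hg0, zero_mul]
      rw [integral_congr_ae hgw, hiwVal]
  · -- second part
    rw [hIocJ w, hwJVal]
  · -- third part
    intro hgind
    rw [hIoc (fun y => g y * w y)]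
    have hEq : EqOn (fun y => g y * w y)
        (fun y => (Icc a (a + C)).indicator (fun _ => (1:ℝ)) y * w y) (Ioo (0:ℝ) 1) := by
      intro y hy
      simp only
      rw [hgind y ⟨hy.1.le, hy.2.le⟩]
    rw [setIntegral_congr_fun measurableSet_Ioo hEq]
    have hptw : ∀ y, (Icc a (a + C)).indicator (fun _ => (1:ℝ)) y * w y
        = (Icc a (a + C)).indicator w y := by
      intro y
      by_cases h : y ∈ Icc a (a + C) <;> simp [h]
    simp only [hptw]
    rw [setIntegral_indicator measurableSet_Icc]
    have hsub : ((Ioo (0:ℝ) 1 ∩ Icc a (a + C) : Set ℝ)) =ᵐ[volume] J := by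
      refine (MeasureTheory.ae_eq_set.2 ⟨?_, ?_⟩)
      · refine measure_mono_null (fun y hy => ?_)
          (measure_union_null (measure_singleton a) (measure_singleton (a + C)))
        obtain ⟨⟨hyI, hyIcc⟩, hyJ⟩ := hy
        simp only [mem_union, mem_singleton_iff]
        by_cases h : a < y
        · right
          have : ¬ y < a + C := fun hcon => hyJ ⟨h, hcon⟩
          linarith [hyIcc.2]
        · left
          linarith [hyIcc.1]
      · have : J \ (Ioo (0:ℝ) 1 ∩ Icc a (a + C)) = ∅ := by
          rw [diff_eq_empty]
          exact fun y hy => ⟨hJI hy, Ioo_subset_Icc_self hy⟩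
        rw [this]
        exact measure_empty
    rw [setIntegral_congr_set hsub, hwJVal]
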